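/- Let n ≥ 2 and B = x eₙ* + eₙ y* ∈ Mₙ(ℂ) with nonzero entries at positions (1,n), (n,1), (n,n), and write its singular value decomposition B = σ₁ u₁ v₁* + σ₂ u₂ v₂*. Then both rank-one summands have nonzero (1,1) entry, i.e., (e₁* u₁)(v₁* e₁) ≠ 0 and (e₁* u₂)(v₂* e₁) ≠ 0. -/

import Mathlib

open Matrix


lemma vmv_mulVec {n : ℕ} (a b w : Fin n → ℂ) :
    Matrix.vecMulVec a b *ᵥ w = (b ⬝ᵥ w) • a := by
  ext i
  simp only [Matrix.mulVec, dotProduct, Matrix.vecMulVec_apply, Pi.smul_apply,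
    smul_eq_mul, Finset.sum_mul]
  exact Finset.sum_congr rfl fun j _ => by ring

lemma vecMul_vmv {n : ℕ} (w a b : Fin n → ℂ) :
    Matrix.vecMul w (Matrix.vecMulVec a b) = (w ⬝ᵥ a) • b := by
  ext j
  simp only [Matrix.vecMul, dotProduct, Matrix.vecMulVec_apply, Pi.smul_apply,
    smul_eq_mul, Finset.sum_mul]
  exact Finset.sum_congr rfl fun i _ => by ring

lemma vecMul_smul_mat {n : ℕ} (w : Fin n → ℂ) (c : ℂ) (A : Matrix (Fin n) (Fin n) ℂ) :
    Matrix.vecMul w (c • A) = c • Matrix.vecMul w A := by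
  ext j
  simp only [Matrix.vecMul, dotProduct, Matrix.smul_apply, Pi.smul_apply,
    smul_eq_mul, Finset.mul_sum]
  exact Finset.sum_congr rfl fun i _ => by ring

lemma star_single {n : ℕ} (N : Fin n) :
    star (Pi.single N (1:ℂ) : Fin n → ℂ) = Pi.single N (1:ℂ) := by
  ext j
  rcases eq_or_ne j N with h | h
  · subst h; simp
  · simp [Pi.single_eq_of_ne h]


lemma aux_key {n : ℕ} (Z N : Fin n) (hZN : Z ≠ N)
    (x y u v : Fin n → ℂ) (σ : ℝ) (hσ : 0 < σ)
    (hu : dotProduct (star u) u = 1)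
    (hv : dotProduct (star v) v = 1)
    (hA : ∀ j, v N * x j + (dotProduct (star y) v) * (Pi.single N (1:ℂ) : Fin n → ℂ) j = σ * u j)
    (hC : ∀ j, (dotProduct (star u) x) * (Pi.single N (1:ℂ) : Fin n → ℂ) j
         + (starRingEnd ℂ) (u N) * (starRingEnd ℂ) (y j) = σ * (starRingEnd ℂ) (v j))
    (hx0 : x Z ≠ 0) (hy0 : y Z ≠ 0)
    (hxyN : x N + (starRingEnd ℂ) (y N) ≠ 0) :
    u Z * (starRingEnd ℂ) (v Z) ≠ 0 := by
  have hσc : (σ : ℂ) ≠ 0 := Complex.ofReal_ne_zero.mpr hσ.ne'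
  have heZ : (Pi.single N (1:ℂ) : Fin n → ℂ) Z = 0 := Pi.single_eq_of_ne hZN 1
  have heN : (Pi.single N (1:ℂ) : Fin n → ℂ) N = 1 := Pi.single_eq_same N 1
  refine mul_ne_zero ?_ ?_
  · -- u Z ≠ 0
    intro h0
    have h1 := hA Z
    rw [heZ, h0, mul_zero, add_zero, mul_zero] at h1
    have hvN : v N = 0 := by
      rcases mul_eq_zero.mp h1 with h | h
      · exact h
      · exact absurd h hx0
    have hα : dotProduct (star y) v = σ * u N := by
      have := hA N
      rw [heN, hvN, zero_mul, zero_add, mul_one] at this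
      exact this
    have huj : ∀ j, u j = u N * (Pi.single N (1:ℂ) : Fin n → ℂ) j := by
      intro j
      apply mul_left_cancel₀ hσc
      have h2 := hA j
      rw [hvN, zero_mul, zero_add, hα] at h2
      rw [← h2]; ring
    have hstu : star u = (starRingEnd ℂ) (u N) • (Pi.single N (1:ℂ) : Fin n → ℂ) := by
      ext j
      rcases eq_or_ne j N with h | h
      · subst h
        simp only [Pi.star_apply, Pi.smul_apply, smul_eq_mul, Pi.single_eq_same, mul_one,
          starRingEnd_apply]
      · simp only [Pi.star_apply, Pi.smul_apply, smul_eq_mul, Pi.single_eq_of_ne h, mul_zero]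
        rw [huj j, Pi.single_eq_of_ne h, mul_zero, star_zero]
    have hux : dotProduct (star u) x = (starRingEnd ℂ) (u N) * x N := by
      rw [hstu, smul_dotProduct, single_dotProduct, one_mul, smul_eq_mul]
    have hN := hC N
    rw [heN, hvN, hux, mul_one, map_zero, mul_zero] at hN
    have huN : u N = 0 := by
      have h3 : (starRingEnd ℂ) (u N) * (x N + (starRingEnd ℂ) (y N)) = 0 := by
        rw [← hN]; ring
      rcases mul_eq_zero.mp h3 with h | h
      · exact by simpa using h
      · exact absurd h hxyN
    have hu0 : u = 0 := funext fun j => by rw [huj j, huN, zero_mul]; rfl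
    rw [hu0] at hu
    simp [dotProduct] at hu
  · -- star (v Z) ≠ 0
    intro h0
    have hvZ : v Z = 0 := by simpa using h0
    have hZ := hC Z
    rw [heZ, hvZ, mul_zero, zero_add, map_zero, mul_zero] at hZ
    have huN : u N = 0 := by
      rcases mul_eq_zero.mp hZ with h | h
      · exact by simpa using h
      · exact absurd (show y Z = 0 by simpa using h) hy0
    have hβ : dotProduct (star u) x = σ * (starRingEnd ℂ) (v N) := by
      have := hC N
      rw [heN, huN, map_zero, zero_mul, add_zero, mul_one] at this
      exact this
    have hvj : ∀ j, (starRingEnd ℂ) (v j) = (starRingEnd ℂ) (v N) * (Pi.single N (1:ℂ) : Fin n → ℂ) j := by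
      intro j
      apply mul_left_cancel₀ hσc
      have h2 := hC j
      rw [huN, map_zero, zero_mul, add_zero, hβ] at h2
      rw [← h2]; ring
    have hvj' : ∀ j, v j = v N * (Pi.single N (1:ℂ) : Fin n → ℂ) j := by
      intro j
      have := congrArg (starRingEnd ℂ) (hvj j)
      rcases eq_or_ne j N with h | h
      · subst h; rw [heN, mul_one]
      · rw [Pi.single_eq_of_ne h, mul_zero]
        have := hvj j
        rw [Pi.single_eq_of_ne h, mul_zero] at this
        exact by simpa using this
    have hv_smul : v = v N • (Pi.single N (1:ℂ) : Fin n → ℂ) := funext fun j => hvj' j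
    have hα : dotProduct (star y) v = v N * (starRingEnd ℂ) (y N) := by
      conv_lhs => rw [hv_smul]
      rw [dotProduct_smul, dotProduct_single, mul_one, smul_eq_mul,
        Pi.star_apply, starRingEnd_apply]
    have hAN := hA N
    rw [heN, hα, huN, mul_zero, mul_one] at hAN
    have hvN : v N = 0 := by
      have h3 : v N * (x N + (starRingEnd ℂ) (y N)) = 0 := by rw [← hAN]; ring
      rcases mul_eq_zero.mp h3 with h | h
      · exact h
      · exact absurd h hxyN
    have hv0 : v = 0 := funext fun j => by rw [hvj' j, hvN, zero_mul]; rfl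
    rw [hv0] at hv
    simp [dotProduct] at hv


/-- The operator (spectral) norm of a complex matrix, induced by the Euclidean norm on `ℂⁿ`. -/
noncomputable def opNorm {n : ℕ} (A : Matrix (Fin n) (Fin n) ℂ) : ℝ :=
  ‖Matrix.toEuclideanCLM (𝕜 := ℂ) (n := Fin n) A‖

/-- Birkhoff–James orthogonality of matrices with respect to the operator norm. -/
def BJ {n : ℕ} (A B : Matrix (Fin n) (Fin n) ℂ) : Prop :=
  ∀ c : ℂ, opNorm A ≤ opNorm (A + c • B)

/-- If `B = x eₙ* + eₙ y*` has nonzero `(1,n)`, `(n,1)`, `(n,n)` entries and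
`B = σ₁ u₁v₁* + σ₂ u₂v₂*` is an SVD (orthonormal pairs, `σ₁ ≥ σ₂ > 0`), then both
rank-one summands have nonzero `(1,1)` entry. -/
theorem stmt5 {n : ℕ} (hn : 2 ≤ n) (x y : Fin n → ℂ)
    (B : Matrix (Fin n) (Fin n) ℂ)
    (hB : B = Matrix.vecMulVec x (star (Pi.single (⟨n - 1, by omega⟩ : Fin n) 1)) +
          Matrix.vecMulVec (Pi.single (⟨n - 1, by omega⟩ : Fin n) 1) (star y))
    (h1n : B ⟨0, by omega⟩ ⟨n - 1, by omega⟩ ≠ 0)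
    (hn1 : B ⟨n - 1, by omega⟩ ⟨0, by omega⟩ ≠ 0)
    (hnn : B ⟨n - 1, by omega⟩ ⟨n - 1, by omega⟩ ≠ 0)
    (σ₁ σ₂ : ℝ) (u₁ u₂ v₁ v₂ : Fin n → ℂ)
    (hu₁ : dotProduct (star u₁) u₁ = 1)
    (hu₂ : dotProduct (star u₂) u₂ = 1)
    (hu₁₂ : dotProduct (star u₁) u₂ = 0)
    (hv₁ : dotProduct (star v₁) v₁ = 1)
    (hv₂ : dotProduct (star v₂) v₂ = 1)
    (hv₁₂ : dotProduct (star v₁) v₂ = 0)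
    (hσ : σ₂ ≤ σ₁) (hσ₂ : 0 < σ₂)
    (hSVD : B = (σ₁ : ℂ) • Matrix.vecMulVec u₁ (star v₁) +
          (σ₂ : ℂ) • Matrix.vecMulVec u₂ (star v₂)) :
    u₁ ⟨0, by omega⟩ * star (v₁ ⟨0, by omega⟩) ≠ 0 ∧
      u₂ ⟨0, by omega⟩ * star (v₂ ⟨0, by omega⟩) ≠ 0 := by
  have hσ₁ : 0 < σ₁ := lt_of_lt_of_le hσ₂ hσ
  set N : Fin n := ⟨n - 1, by omega⟩ with hN
  set Z : Fin n := ⟨0, by omega⟩ with hZ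
  have hZN : Z ≠ N := by
    simp only [hZ, hN, Ne, Fin.mk.injEq]
    omega
  set E : Fin n → ℂ := Pi.single N 1 with hE
  have hEs : star E = E := by
    ext j
    rcases eq_or_ne j N with h | h
    · subst h; simp [hE]
    · simp [hE, Pi.single_eq_of_ne h]
  have heZ : E Z = 0 := Pi.single_eq_of_ne hZN 1
  have heN : E N = 1 := Pi.single_eq_same N 1
  -- entries
  have hent : ∀ j k, B j k = x j * star (E k) + E j * star (y k) := by
    intro j k
    rw [hB]
    simp [Matrix.add_apply, Matrix.vecMulVec_apply]
  have hx0 : x Z ≠ 0 := by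
    intro h
    apply h1n
    rw [hent Z N, heZ, heN, h]; simp
  have hy0 : y Z ≠ 0 := by
    intro h
    apply hn1
    rw [hent N Z, heZ, heN, h]; simp
  have hxyN : x N + (starRingEnd ℂ) (y N) ≠ 0 := by
    intro h
    apply hnn
    rw [hent N N, heN, star_one, mul_one, one_mul]
    rw [starRingEnd_apply] at h
    exact h
  -- orthogonality swaps
  have hv21 : dotProduct (star v₂) v₁ = 0 := by
    rw [Matrix.star_dotProduct, hv₁₂, star_zero]
  have hu21 : dotProduct (star u₂) u₁ = 0 := by
    rw [Matrix.star_dotProduct, hu₁₂, star_zero]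
  -- generic argument for one singular pair
  have main : ∀ (σ : ℝ), 0 < σ → ∀ u v : Fin n → ℂ,
      dotProduct (star u) u = 1 → dotProduct (star v) v = 1 →
      B *ᵥ v = (σ : ℂ) • u → Matrix.vecMul (star u) B = (σ : ℂ) • star v →
      u Z * star (v Z) ≠ 0 := by
    intro σ hσ u v hu hv hmv hvm
    have h1 : (v N) • x + (dotProduct (star y) v) • E = (σ : ℂ) • u := by
      rw [hB, Matrix.add_mulVec, vmv_mulVec, vmv_mulVec, hEs] at hmv
      rw [← hmv, hE, single_dotProduct, one_mul]
    have hA : ∀ j, v N * x j + (dotProduct (star y) v) *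
        (Pi.single N (1:ℂ) : Fin n → ℂ) j = σ * u j := by
      intro j
      have := congrFun h1 j
      simpa only [Pi.add_apply, Pi.smul_apply, smul_eq_mul, hE] using this
    have h2 : (dotProduct (star u) x) • E + (starRingEnd ℂ) (u N) • star y
        = (σ : ℂ) • star v := by
      rw [hB, Matrix.vecMul_add, vecMul_vmv, vecMul_vmv, hEs] at hvm
      rw [← hvm, hE, dotProduct_single, mul_one, Pi.star_apply, starRingEnd_apply]
    have hC : ∀ j, (dotProduct (star u) x) * (Pi.single N (1:ℂ) : Fin n → ℂ) j
        + (starRingEnd ℂ) (u N) * (starRingEnd ℂ) (y j) = σ * (starRingEnd ℂ) (v j) := by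
      intro j
      have := congrFun h2 j
      simpa only [Pi.add_apply, Pi.smul_apply, Pi.star_apply, smul_eq_mul, hE,
        starRingEnd_apply] using this
    have := aux_key Z N hZN x y u v σ hσ hu hv hA hC hx0 hy0 hxyN
    rwa [starRingEnd_apply] at this
  -- equations for the two pairs
  have hmv1 : B *ᵥ v₁ = (σ₁ : ℂ) • u₁ := by
    rw [hSVD, Matrix.add_mulVec, Matrix.smul_mulVec, Matrix.smul_mulVec,
      vmv_mulVec, vmv_mulVec, hv₁, hv21, one_smul, zero_smul, smul_zero, add_zero]
  have hvm1 : Matrix.vecMul (star u₁) B = (σ₁ : ℂ) • star v₁ := by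
    rw [hSVD, Matrix.vecMul_add, vecMul_smul_mat, vecMul_smul_mat,
      vecMul_vmv, vecMul_vmv, hu₁, hu₁₂, one_smul, zero_smul, smul_zero, add_zero]
  have hmv2 : B *ᵥ v₂ = (σ₂ : ℂ) • u₂ := by
    rw [hSVD, Matrix.add_mulVec, Matrix.smul_mulVec, Matrix.smul_mulVec,
      vmv_mulVec, vmv_mulVec, hv₁₂, hv₂, one_smul, zero_smul, smul_zero, zero_add]
  have hvm2 : Matrix.vecMul (star u₂) B = (σ₂ : ℂ) • star v₂ := by
    rw [hSVD, Matrix.vecMul_add, vecMul_smul_mat, vecMul_smul_mat,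
      vecMul_vmv, vecMul_vmv, hu₂, hu21, one_smul, zero_smul, smul_zero, zero_add]
  exact ⟨main σ₁ hσ₁ u₁ v₁ hu₁ hv₁ hmv1 hvm1, main σ₂ hσ₂ u₂ v₂ hu₂ hv₂ hmv2 hvm2⟩
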